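/- For every two-dimensional lattice polygon Δ and integer d ≥ 0, if every edge of Δ contains at least d+1 lattice points, then lw(Δ) ≥ d. -/

import Mathlib

open Set

def toR2 (q : ℤ × ℤ) : ℝ × ℝ := ((q.1 : ℝ), (q.2 : ℝ))

def isLatticePt (p : ℝ × ℝ) : Prop := ∃ q : ℤ × ℤ, p = toR2 q

def IsLatticePolygon (Δ : Set (ℝ × ℝ)) : Prop :=
  ∃ S : Finset (ℤ × ℤ), Δ = convexHull ℝ (toR2 '' ↑S)

def IsZAffine (φ : ℝ × ℝ → ℝ × ℝ) : Prop :=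
  ∃ a b c d e f : ℤ, (a * d - b * c = 1 ∨ a * d - b * c = -1) ∧
    ∀ p : ℝ × ℝ, φ p = ((a : ℝ) * p.1 + (b : ℝ) * p.2 + (e : ℝ),
      (c : ℝ) * p.1 + (d : ℝ) * p.2 + (f : ℝ))

def widthLE (Δ : Set (ℝ × ℝ)) (s : ℤ) : Prop :=
  ∃ φ, IsZAffine φ ∧ ∀ p ∈ Δ, 0 ≤ (φ p).2 ∧ (φ p).2 ≤ (s : ℝ)

open Classical in
noncomputable def latticeWidth (Δ : Set (ℝ × ℝ)) : ℤ :=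
  if Δ = ∅ then -1 else sInf {s : ℤ | 0 ≤ s ∧ widthLE Δ s}

def simplexPoly (d : ℤ) : Set (ℝ × ℝ) :=
  convexHull ℝ {((0:ℝ), (0:ℝ)), ((d:ℝ), (0:ℝ)), ((0:ℝ), (d:ℝ))}

def interiorPoly (Δ : Set (ℝ × ℝ)) : Set (ℝ × ℝ) :=
  convexHull ℝ {p | p ∈ interior Δ ∧ isLatticePt p}

def equivPoly (Δ Δ' : Set (ℝ × ℝ)) : Prop :=
  ∃ φ, IsZAffine φ ∧ φ '' Δ = Δ'

def TwoDim (Δ : Set (ℝ × ℝ)) : Prop := affineSpan ℝ Δ = ⊤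

/-- F is an edge of Δ : a one-dimensional exposed face. -/
def IsEdgeOf (Δ F : Set (ℝ × ℝ)) : Prop :=
  IsExposed ℝ Δ F ∧ ∃ p q : ℝ × ℝ, p ≠ q ∧ F = segment ℝ p q

/-! ### Auxiliary material -/

/-- An affine functional on `ℝ × ℝ`. -/
def afun (α β γ : ℝ) (p : ℝ × ℝ) : ℝ := α * p.1 + β * p.2 + γ

lemma afun_continuous (α β γ : ℝ) : Continuous (afun α β γ) := by
  unfold afun; fun_prop

lemma afun_combo (α β γ u v : ℝ) (huv : u + v = 1) (x y : ℝ × ℝ) :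
    afun α β γ (u • x + v • y) = u * afun α β γ x + v * afun α β γ y := by
  have hv : v = 1 - u := by linarith
  subst hv
  simp only [afun, Prod.fst_add, Prod.snd_add, Prod.smul_fst, Prod.smul_snd, smul_eq_mul]
  ring

lemma afun_le_on_hull {α β γ M : ℝ} {P : Set (ℝ × ℝ)} (hP : ∀ p ∈ P, afun α β γ p ≤ M) :
    ∀ x ∈ convexHull ℝ P, afun α β γ x ≤ M := by
  have hc : Convex ℝ {x | afun α β γ x ≤ M} := by
    intro x hx y hy u v hu hv huv
    simp only [mem_setOf_eq] at hx hy ⊢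
    rw [afun_combo α β γ u v huv]
    have h1 : u * afun α β γ x ≤ u * M := mul_le_mul_of_nonneg_left hx hu
    have h2 : v * afun α β γ y ≤ v * M := mul_le_mul_of_nonneg_left hy hv
    have h3 : u * M + v * M = M := by rw [← add_mul, huv, one_mul]
    linarith
  exact fun x hx => convexHull_min hP hc hx

/-- Key finite construction: given a finite set and two functions, with `ℓ` non-constant,
there is a tilt `t` such that `m + t • ℓ` attains its maximum at two points with
different `ℓ`-values. -/
lemma exists_tilt (S : Finset (ℝ × ℝ)) (hS : S.Nonempty) (ℓ m : (ℝ × ℝ) → ℝ)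
    (hnc : ∃ p ∈ S, ∃ q ∈ S, ℓ p ≠ ℓ q) :
    ∃ t : ℝ, ∃ u ∈ S, ∃ w ∈ S, ℓ u ≠ ℓ w ∧
      (∀ p ∈ S, m p + t * ℓ p ≤ m u + t * ℓ u) ∧ m w + t * ℓ w = m u + t * ℓ u := by
  classical
  obtain ⟨v0, hv0S, hv0⟩ := Finset.exists_mem_eq_sup' hS m
  set M1 := S.sup' hS m with hM1
  set S1 := S.filter (fun p => m p = M1) with hS1
  have hS1ne : S1.Nonempty := ⟨v0, Finset.mem_filter.2 ⟨hv0S, hv0.symm⟩⟩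
  obtain ⟨v, hvS1, hv⟩ := Finset.exists_mem_eq_sup' hS1ne ℓ
  have hvS : v ∈ S := (Finset.mem_filter.1 hvS1).1
  have hvm : m v = M1 := (Finset.mem_filter.1 hvS1).2
  have hmax : ∀ p ∈ S, m p ≤ m v := fun p hp => hvm ▸ Finset.le_sup' m hp
  have htie : ∀ p ∈ S, m p = m v → ℓ p ≤ ℓ v := by
    intro p hp hpm
    have : p ∈ S1 := Finset.mem_filter.2 ⟨hp, by rw [hpm, hvm]⟩
    exact hv ▸ Finset.le_sup' ℓ this
  by_cases hT : (S.filter (fun p => ℓ v < ℓ p)).Nonempty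
  · -- tilt upward
    set T := S.filter (fun p => ℓ v < ℓ p) with hTdef
    have hstrict : ∀ p ∈ T, m p < m v := by
      intro p hp
      obtain ⟨hpS, hpl⟩ := Finset.mem_filter.1 hp
      rcases lt_or_eq_of_le (hmax p hpS) with h | h
      · exact h
      · exact absurd (htie p hpS h) (not_le.2 hpl)
    obtain ⟨p₀, hp₀T, hp₀⟩ :=
      Finset.exists_mem_eq_inf' hT (fun p => (m v - m p) / (ℓ p - ℓ v))
    set t := T.inf' hT (fun p => (m v - m p) / (ℓ p - ℓ v)) with ht
    obtain ⟨hp₀S, hp₀l⟩ := Finset.mem_filter.1 hp₀T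
    have htpos : 0 < t := by
      rw [hp₀]
      exact div_pos (by linarith [hstrict p₀ hp₀T]) (by linarith)
    refine ⟨t, v, hvS, p₀, hp₀S, ne_of_lt hp₀l, ?_, ?_⟩
    · intro p hp
      by_cases hpl : ℓ v < ℓ p
      · have hpT : p ∈ T := Finset.mem_filter.2 ⟨hp, hpl⟩
        have h1 : t ≤ (m v - m p) / (ℓ p - ℓ v) := Finset.inf'_le _ hpT
        rw [le_div_iff₀ (by linarith : (0:ℝ) < ℓ p - ℓ v)] at h1
        nlinarith
      · have h1 : ℓ p ≤ ℓ v := not_lt.1 hpl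
        have h2 : m p ≤ m v := hmax p hp
        nlinarith
    · have : t * (ℓ p₀ - ℓ v) = m v - m p₀ := by
        rw [hp₀, div_mul_cancel₀]
        linarith
      nlinarith
  · -- all of S has ℓ ≤ ℓ v ; tilt downward
    have hall : ∀ p ∈ S, ℓ p ≤ ℓ v := by
      intro p hp
      by_contra hc
      exact hT ⟨p, Finset.mem_filter.2 ⟨hp, not_le.1 hc⟩⟩
    have hT' : (S.filter (fun p => ℓ p < ℓ v)).Nonempty := by
      obtain ⟨p, hp, q, hq, hpq⟩ := hnc
      by_cases hpv : ℓ p = ℓ v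
      · refine ⟨q, Finset.mem_filter.2 ⟨hq, lt_of_le_of_ne (hall q hq) ?_⟩⟩
        intro hqe
        exact hpq (by rw [hpv, hqe])
      · exact ⟨p, Finset.mem_filter.2 ⟨hp, lt_of_le_of_ne (hall p hp) hpv⟩⟩
    set T := S.filter (fun p => ℓ p < ℓ v) with hTdef
    obtain ⟨p₀, hp₀T, hp₀⟩ :=
      Finset.exists_mem_eq_sup' hT' (fun p => (m p - m v) / (ℓ v - ℓ p))
    set t := T.sup' hT' (fun p => (m p - m v) / (ℓ v - ℓ p)) with ht
    obtain ⟨hp₀S, hp₀l⟩ := Finset.mem_filter.1 hp₀T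
    refine ⟨t, v, hvS, p₀, hp₀S, (ne_of_lt hp₀l).symm, ?_, ?_⟩
    · intro p hp
      rcases lt_or_eq_of_le (hall p hp) with hpl | hpl
      · have hpT : p ∈ T := Finset.mem_filter.2 ⟨hp, hpl⟩
        have h1 : (m p - m v) / (ℓ v - ℓ p) ≤ t := by
          rw [ht]
          exact Finset.le_sup' (fun p => (m p - m v) / (ℓ v - ℓ p)) hpT
        rw [div_le_iff₀ (by linarith : (0:ℝ) < ℓ v - ℓ p)] at h1
        nlinarith
      · have h2 : m p ≤ m v := hmax p hp
        rw [hpl]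
        nlinarith
    · have : t * (ℓ v - ℓ p₀) = m p₀ - m v := by
        rw [hp₀, div_mul_cancel₀]
        linarith
      nlinarith

lemma width_ge_of_long_edges (S : Finset (ℤ × ℤ)) (Δ : Set (ℝ × ℝ))
    (hΔeq : Δ = convexHull ℝ (toR2 '' ↑S)) (h2 : TwoDim Δ) (d : ℤ)
    (h : ∀ F, IsEdgeOf Δ F → ∃ T : Finset (ℝ × ℝ),
      ↑T ⊆ F ∧ (∀ p ∈ T, isLatticePt p) ∧ d + 1 ≤ (T.card : ℤ))
    (s : ℤ) (hs : 0 ≤ s) (hw : widthLE Δ s) : d ≤ s := by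
  classical
  obtain ⟨φ, ⟨a, b, c, dd, e, f, hdet, hφ⟩, hbound⟩ := hw
  set ℓ : (ℝ × ℝ) → ℝ := afun c dd f with hℓ
  set m : (ℝ × ℝ) → ℝ := afun a b e with hm
  have hℓφ : ∀ p, (φ p).2 = ℓ p := by
    intro p; rw [hφ]; simp [hℓ, afun]
  have hbound' : ∀ p ∈ Δ, 0 ≤ ℓ p ∧ ℓ p ≤ (s : ℝ) := by
    intro p hp; rw [← hℓφ]; exact hbound p hp
  have hdetR : ((a : ℝ) * dd - b * c) ≠ 0 := by
    rcases hdet with h1 | h1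
    · have : ((a * dd - b * c : ℤ) : ℝ) = 1 := by rw [h1]; norm_num
      push_cast at this; rw [this]; norm_num
    · have : ((a * dd - b * c : ℤ) : ℝ) = -1 := by rw [h1]; norm_num
      push_cast at this; rw [this]; norm_num
  have hind : ∀ x y : ℝ × ℝ, m x = m y → ℓ x = ℓ y → x = y := by
    intro x y h1 h2
    simp only [hm, hℓ, afun] at h1 h2
    have e1 : (a : ℝ) * (x.1 - y.1) + b * (x.2 - y.2) = 0 := by linarith
    have e2 : (c : ℝ) * (x.1 - y.1) + dd * (x.2 - y.2) = 0 := by linarith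
    have k1 : ((a : ℝ) * dd - b * c) * (x.1 - y.1) = 0 := by linear_combination (dd : ℝ) * e1 - (b : ℝ) * e2
    have k2 : ((a : ℝ) * dd - b * c) * (x.2 - y.2) = 0 := by linear_combination (a : ℝ) * e2 - (c : ℝ) * e1
    have hx1 : x.1 = y.1 := by
      rcases mul_eq_zero.1 k1 with h | h
      · exact absurd h hdetR
      · linarith
    have hx2 : x.2 = y.2 := by
      rcases mul_eq_zero.1 k2 with h | h
      · exact absurd h hdetR
      · linarith
    exact Prod.ext hx1 hx2
  have hcd : ¬((c : ℝ) = 0 ∧ (dd : ℝ) = 0) := by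
    rintro ⟨hc0, hd0⟩
    rw [hc0, hd0] at hdetR
    simp at hdetR
  set P : Finset (ℝ × ℝ) := S.image toR2 with hP
  have hPc : (↑P : Set (ℝ × ℝ)) = toR2 '' ↑S := Finset.coe_image
  have hΔ' : Δ = convexHull ℝ ↑P := by rw [hΔeq, hPc]
  have hΔne : Δ.Nonempty := by
    by_contra hc
    rw [not_nonempty_iff_eq_empty] at hc
    rw [hc] at h2
    unfold TwoDim at h2
    rw [AffineSubspace.span_empty] at h2
    exact AffineSubspace.bot_ne_top ℝ (ℝ × ℝ) (ℝ × ℝ) h2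
  have hPne : P.Nonempty := by
    by_contra hc
    rw [Finset.not_nonempty_iff_eq_empty] at hc
    rw [hc] at hΔ'
    simp [convexHull_empty] at hΔ'
    exact (not_nonempty_iff_eq_empty.2 hΔ') hΔne
  -- ℓ is non-constant on P
  have hnc : ∃ p ∈ P, ∃ q ∈ P, ℓ p ≠ ℓ q := by
    by_contra hc
    push_neg at hc
    obtain ⟨p₀, hp₀⟩ := hPne
    let A : AffineSubspace ℝ (ℝ × ℝ) :=
      { carrier := {x | ℓ x = ℓ p₀}
        smul_vsub_vadd_mem' := by
          intro t x y z hx hy hz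
          simp only [mem_setOf_eq, hℓ, afun, vsub_eq_sub, vadd_eq_add, Prod.fst_add,
            Prod.snd_add, Prod.fst_sub, Prod.snd_sub, Prod.smul_fst, Prod.smul_snd,
            smul_eq_mul] at hx hy hz ⊢
          linear_combination t * hx - t * hy + hz }
    have hPA : (↑P : Set (ℝ × ℝ)) ⊆ (A : Set (ℝ × ℝ)) := by
      intro p hp
      exact hc p (by exact_mod_cast hp) p₀ hp₀
    have hΔA : Δ ⊆ (A : Set (ℝ × ℝ)) := by
      rw [hΔ']
      exact convexHull_min hPA A.convex
    have hle : affineSpan ℝ Δ ≤ A := affineSpan_le.2 hΔA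
    rw [h2] at hle
    have hz : (p₀ + ((c : ℝ), (dd : ℝ))) ∈ A := hle (AffineSubspace.mem_top ℝ (ℝ × ℝ) _)
    have hzeq : ℓ (p₀ + ((c : ℝ), (dd : ℝ))) = ℓ p₀ := hz
    simp only [hℓ, afun, Prod.fst_add, Prod.snd_add] at hzeq
    have hsq : (c : ℝ) ^ 2 + (dd : ℝ) ^ 2 = 0 := by nlinarith
    exact hcd ⟨by nlinarith, by nlinarith⟩
  obtain ⟨t, u, huP, w, hwP, hℓuw, hmaxP, heq⟩ := exists_tilt P hPne ℓ m hnc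
  set gα : ℝ := (a : ℝ) + t * c with hgα
  set gβ : ℝ := (b : ℝ) + t * dd with hgβ
  set gγ : ℝ := (e : ℝ) + t * f with hgγ
  set g : (ℝ × ℝ) → ℝ := afun gα gβ gγ with hg
  have hgval : ∀ p, g p = m p + t * ℓ p := by
    intro p; simp only [hg, hm, hℓ, afun, hgα, hgβ, hgγ]; ring
  set M : ℝ := g u with hM
  have hmaxP' : ∀ p ∈ (↑P : Set (ℝ × ℝ)), g p ≤ M := by
    intro p hp
    have : M = g u := hM
    rw [this]
    simp only [hgval]
    exact hmaxP p (by exact_mod_cast hp)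
  have hΔle : ∀ x ∈ Δ, g x ≤ M := by
    rw [hΔ']
    exact afun_le_on_hull hmaxP'
  have hginj : ∀ x y : ℝ × ℝ, g x = g y → ℓ x = ℓ y → x = y := by
    intro x y h1 h2
    refine hind x y ?_ h2
    rw [hgval, hgval, h2] at h1
    linarith
  set F : Set (ℝ × ℝ) := Δ ∩ {x | g x = M} with hF
  have hmemF : ∀ x, x ∈ F ↔ x ∈ Δ ∧ g x = M := by
    intro x; rfl
  have huΔ : u ∈ Δ := by
    rw [hΔ']; exact subset_convexHull ℝ _ (by exact_mod_cast huP)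
  have hwΔ : w ∈ Δ := by
    rw [hΔ']; exact subset_convexHull ℝ _ (by exact_mod_cast hwP)
  have huF : u ∈ F := ⟨huΔ, rfl⟩
  have hwF : w ∈ F := ⟨hwΔ, by
    show g w = M
    have h1 : g w = g u := by simp only [hgval]; exact heq
    exact h1.trans hM.symm⟩
  -- F is exposed
  have hFexp : IsExposed ℝ Δ F := by
    intro _
    refine ⟨gα • (ContinuousLinearMap.fst ℝ ℝ ℝ) + gβ • (ContinuousLinearMap.snd ℝ ℝ ℝ), ?_⟩
    have hlval : ∀ x : ℝ × ℝ,
        (gα • (ContinuousLinearMap.fst ℝ ℝ ℝ) + gβ • (ContinuousLinearMap.snd ℝ ℝ ℝ)) x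
          = g x - gγ := by
      intro x
      simp [hg, afun, smul_eq_mul]
    ext x
    simp only [hmemF, mem_setOf_eq]
    constructor
    · rintro ⟨hxΔ, hxM⟩
      refine ⟨hxΔ, fun y hy => ?_⟩
      rw [hlval, hlval, hxM]
      have := hΔle y hy
      linarith
    · rintro ⟨hxΔ, hx⟩
      refine ⟨hxΔ, ?_⟩
      have h1 := hx u huΔ
      rw [hlval, hlval] at h1
      have h2 := hΔle x hxΔ
      rw [hM] at h2 ⊢
      linarith
  -- F is compact and convex
  have hΔcomp : IsCompact Δ := by
    rw [hΔ']
    exact P.finite_toSet.isCompact_convexHull ℝ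
  have hFcomp : IsCompact F :=
    hΔcomp.inter_right (isClosed_eq (afun_continuous _ _ _) continuous_const)
  have hΔconv : Convex ℝ Δ := by rw [hΔ']; exact convex_convexHull ℝ _
  have hFconv : Convex ℝ F := by
    refine hΔconv.inter ?_
    intro x hx y hy κ μ hκ hμ hκμ
    simp only [mem_setOf_eq] at hx hy ⊢
    show g _ = M
    rw [hg, afun_combo _ _ _ _ _ hκμ]
    show κ * g x + μ * g y = M
    rw [hx, hy]
    linear_combination M * hκμ
  have hFne : F.Nonempty := ⟨u, huF⟩
  obtain ⟨u', hu'F, hu'min⟩ := hFcomp.exists_isMinOn hFne (afun_continuous (c:ℝ) dd f).continuousOn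
  obtain ⟨w', hw'F, hw'max⟩ := hFcomp.exists_isMaxOn hFne (afun_continuous (c:ℝ) dd f).continuousOn
  have hu'min' : ∀ x ∈ F, ℓ u' ≤ ℓ x := fun x hx => hu'min hx
  have hw'max' : ∀ x ∈ F, ℓ x ≤ ℓ w' := fun x hx => hw'max hx
  have hlt : ℓ u' < ℓ w' := by
    rcases lt_or_eq_of_le (le_trans (hu'min' u huF) (hw'max' u huF)) with h1 | h1
    · exact h1
    · exfalso
      apply hℓuw
      have h3 := hu'min' w hwF
      have h4 := hw'max' w hwF
      have h5 := hu'min' u huF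
      have h6 := hw'max' u huF
      linarith
  have hne : u' ≠ w' := fun hc => by rw [hc] at hlt; exact lt_irrefl _ hlt
  have hgF : ∀ x ∈ F, g x = M := fun x hx => hx.2
  have hFseg : F = segment ℝ u' w' := by
    apply Subset.antisymm
    · intro x hx
      set τ : ℝ := (ℓ x - ℓ u') / (ℓ w' - ℓ u') with hτ
      have hd0 : (0:ℝ) < ℓ w' - ℓ u' := by linarith
      have h0 : 0 ≤ τ := div_nonneg (by linarith [hu'min' x hx]) (le_of_lt hd0)
      have h1 : τ ≤ 1 := (div_le_one hd0).2 (by linarith [hw'max' x hx])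
      set y : ℝ × ℝ := (1 - τ) • u' + τ • w' with hy
      have hyseg : y ∈ segment ℝ u' w' := ⟨1 - τ, τ, by linarith, h0, by ring, rfl⟩
      have hτmul : τ * (ℓ w' - ℓ u') = ℓ x - ℓ u' := by
        rw [hτ, div_mul_cancel₀ _ (ne_of_gt hd0)]
      have hℓy : ℓ y = ℓ x := by
        rw [hy, hℓ, afun_combo _ _ _ _ _ (by ring : (1 - τ) + τ = 1)]
        show (1 - τ) * ℓ u' + τ * ℓ w' = ℓ x
        nlinarith
      have hgy : g y = M := by
        rw [hy, hg, afun_combo _ _ _ _ _ (by ring : (1 - τ) + τ = 1)]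
        show (1 - τ) * g u' + τ * g w' = M
        rw [hgF u' hu'F, hgF w' hw'F]
        ring
      have hxy : x = y := hginj x y (by rw [hgy, hgF x hx]) hℓy.symm
      rw [hxy]; exact hyseg
    · exact hFconv.segment_subset hu'F hw'F
  have hedge : IsEdgeOf Δ F := ⟨hFexp, u', w', hne, hFseg⟩
  obtain ⟨T, hTF, hTlat, hTcard⟩ := h F hedge
  -- map T to integers via ℓ
  set ψ : (ℝ × ℝ) → ℤ := fun p => ⌊ℓ p⌋ with hψ
  have hψint : ∀ p ∈ T, ((ψ p : ℤ) : ℝ) = ℓ p := by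
    intro p hp
    obtain ⟨q, hq⟩ := hTlat p hp
    have : ℓ p = ((c * q.1 + dd * q.2 + f : ℤ) : ℝ) := by
      rw [hq]
      simp only [hℓ, afun, toR2]
      push_cast
      ring
    rw [hψ]
    simp only [this, Int.floor_intCast]
  have hTΔ : ∀ p ∈ T, p ∈ Δ := by
    intro p hp
    exact (hTF (by exact_mod_cast hp)).1
  have hrange : ∀ p ∈ T, ψ p ∈ Finset.Icc (0 : ℤ) s := by
    intro p hp
    obtain ⟨h0, h1⟩ := hbound' p (hTΔ p hp)
    rw [Finset.mem_Icc]
    constructor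
    · have : (0:ℝ) ≤ ((ψ p : ℤ) : ℝ) := by rw [hψint p hp]; exact h0
      exact_mod_cast this
    · have : ((ψ p : ℤ) : ℝ) ≤ (s : ℝ) := by rw [hψint p hp]; exact h1
      exact_mod_cast this
  have hinj : Set.InjOn ψ ↑T := by
    intro p hp q hq hpq
    have hpF := hTF hp
    have hqF := hTF hq
    have hℓeq : ℓ p = ℓ q := by
      rw [← hψint p (by exact_mod_cast hp), ← hψint q (by exact_mod_cast hq), hpq]
    exact hginj p q (by rw [hgF p hpF, hgF q hqF]) hℓeq
  have hcard1 : T.card = (T.image ψ).card := (Finset.card_image_of_injOn hinj).symm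
  have hcard2 : (T.image ψ).card ≤ (Finset.Icc (0 : ℤ) s).card := by
    apply Finset.card_le_card
    intro x hx
    obtain ⟨p, hp, hpx⟩ := Finset.mem_image.1 hx
    rw [← hpx]
    exact hrange p hp
  have hcard3 : (Finset.Icc (0 : ℤ) s).card = (s + 1).toNat := by
    rw [Int.card_Icc]; norm_num
  have hfin : ((s + 1).toNat : ℤ) = s + 1 := Int.toNat_of_nonneg (by linarith)
  have : (T.card : ℤ) ≤ s + 1 := by
    rw [hcard1]
    calc ((T.image ψ).card : ℤ) ≤ ((Finset.Icc (0 : ℤ) s).card : ℤ) := by exact_mod_cast hcard2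
    _ = s + 1 := by rw [hcard3, hfin]
  linarith

/-- If every edge of a two-dimensional lattice polygon Δ contains at least d+1 lattice
points, then lw(Δ) ≥ d. -/
theorem lw_ge_of_long_edges (Δ : Set (ℝ × ℝ))
    (hΔ : IsLatticePolygon Δ) (h2 : TwoDim Δ) (d : ℤ) (hd : 0 ≤ d)
    (h : ∀ F, IsEdgeOf Δ F → ∃ T : Finset (ℝ × ℝ),
      ↑T ⊆ F ∧ (∀ p ∈ T, isLatticePt p) ∧ d + 1 ≤ (T.card : ℤ)) :
    d ≤ latticeWidth Δ := by
  classical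
  obtain ⟨S, hΔeq⟩ := hΔ
  have hΔne : Δ ≠ ∅ := by
    intro hc
    rw [hc] at h2
    unfold TwoDim at h2
    rw [AffineSubspace.span_empty] at h2
    exact AffineSubspace.bot_ne_top ℝ (ℝ × ℝ) (ℝ × ℝ) h2
  rw [latticeWidth, if_neg hΔne]
  have hSne : S.Nonempty := by
    by_contra hc
    rw [Finset.not_nonempty_iff_eq_empty] at hc
    apply hΔne
    rw [hΔeq, hc]
    simp
  -- the width set is nonempty
  set N : ℤ := S.sup' hSne (fun q => q.2) with hN
  set n : ℤ := S.inf' hSne (fun q => q.2) with hn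
  have hnN : n ≤ N := by
    obtain ⟨z, hz⟩ := hSne
    exact le_trans (Finset.inf'_le _ hz) (Finset.le_sup' _ hz)
  have hub : ∀ p ∈ Δ, afun 0 1 0 p ≤ (N : ℝ) := by
    rw [hΔeq]
    apply afun_le_on_hull
    rintro p ⟨z, hz, rfl⟩
    simp only [afun, toR2]
    have : z.2 ≤ N := Finset.le_sup' _ (by exact_mod_cast hz)
    have : (z.2 : ℝ) ≤ (N : ℝ) := by exact_mod_cast this
    linarith
  have hlb : ∀ p ∈ Δ, afun 0 (-1) 0 p ≤ (-n : ℝ) := by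
    rw [hΔeq]
    apply afun_le_on_hull
    rintro p ⟨z, hz, rfl⟩
    simp only [afun, toR2]
    have : n ≤ z.2 := Finset.inf'_le _ (by exact_mod_cast hz)
    have : (n : ℝ) ≤ (z.2 : ℝ) := by exact_mod_cast this
    push_cast
    linarith
  have hwne : ((N - n : ℤ)) ∈ {s : ℤ | 0 ≤ s ∧ widthLE Δ s} := by
    refine ⟨by linarith, ?_⟩
    refine ⟨fun p => ((1 : ℝ) * p.1 + (0 : ℝ) * p.2 + ((0 : ℤ) : ℝ),
      (0 : ℝ) * p.1 + (1 : ℝ) * p.2 + ((-n : ℤ) : ℝ)), ⟨1, 0, 0, 1, 0, -n, by left; ring, fun p => by norm_num⟩, ?_⟩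
    intro p hp
    have h1 := hub p hp
    have h2 := hlb p hp
    simp only [afun] at h1 h2
    constructor
    · push_cast
      linarith
    · push_cast
      linarith
  apply le_csInf ⟨N - n, hwne⟩
  rintro s ⟨hs0, hsw⟩
  exact width_ge_of_long_edges S Δ hΔeq h2 d h s hs0 hsw
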